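/- Let k be a field and C a k-linear monoidal category. Let X be an object equipped with an associative multiplication m with two-sided unit e and a coassociative comultiplication δ with two-sided counit ε, and let X' be similarly equipped with (m', e', δ', ε') and be separable: m' ∘ δ' = λ • id_{X'} for some scalar λ ∈ k. Let f : X' ⟶ X be a unital algebra morphism (f ∘ e' = e, f ∘ m' = m ∘ (f ⊗ f)) and h : X ⟶ X' a counital coalgebra morphism (ε' ∘ h = ε, (h ⊗ h) ∘ δ = δ' ∘ h), and set g := f ∘ h : X ⟶ X. Then g * g = λ • g, where g * g := m ∘ (g ⊗ g) ∘ δ. (Paper: Proposition 3.13, first part.) -/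

import Mathlib

open CategoryTheory MonoidalCategory

/-- **Proposition 3.13 (first part).** Let `X, X'` be unital algebra and counital
coalgebra objects in a `k`-linear monoidal category, with `X'` separable
(`m' ∘ δ' = λ • id`).  If `f : X' ⟶ X` is a unital algebra morphism and `h : X ⟶ X'` a
counital coalgebra morphism, then `g := f ∘ h` satisfies `g * g = λ • g`, where
`g * g := m ∘ (g ⊗ g) ∘ δ`. -/
theorem stmt_10 {k : Type*} [Field k] {C : Type*} [Category C] [Preadditive C]
    [MonoidalCategory C] [CategoryTheory.Linear k C] [MonoidalPreadditive C]
    [MonoidalLinear k C]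
    (X X' : C) (m : X ⊗ X ⟶ X) (e : 𝟙_ C ⟶ X) (δ : X ⟶ X ⊗ X) (ε : X ⟶ 𝟙_ C)
    (m' : X' ⊗ X' ⟶ X') (e' : 𝟙_ C ⟶ X') (δ' : X' ⟶ X' ⊗ X') (ε' : X' ⟶ 𝟙_ C)
    (h_assoc : (m ▷ X) ≫ m = (α_ X X X).hom ≫ (X ◁ m) ≫ m)
    (h_unit_l : (e ▷ X) ≫ m = (λ_ X).hom)
    (h_unit_r : (X ◁ e) ≫ m = (ρ_ X).hom)
    (h_coassoc : δ ≫ (δ ▷ X) ≫ (α_ X X X).hom = δ ≫ (X ◁ δ))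
    (h_counit_l : δ ≫ (ε ▷ X) = (λ_ X).inv)
    (h_counit_r : δ ≫ (X ◁ ε) = (ρ_ X).inv)
    (h_assoc' : (m' ▷ X') ≫ m' = (α_ X' X' X').hom ≫ (X' ◁ m') ≫ m')
    (h_unit_l' : (e' ▷ X') ≫ m' = (λ_ X').hom)
    (h_unit_r' : (X' ◁ e') ≫ m' = (ρ_ X').hom)
    (h_coassoc' : δ' ≫ (δ' ▷ X') ≫ (α_ X' X' X').hom = δ' ≫ (X' ◁ δ'))
    (h_counit_l' : δ' ≫ (ε' ▷ X') = (λ_ X').inv)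
    (h_counit_r' : δ' ≫ (X' ◁ ε') = (ρ_ X').inv)
    (lam : k) (h_sep : δ' ≫ m' = lam • 𝟙 X')
    (f : X' ⟶ X) (h : X ⟶ X')
    (hf_e : e' ≫ f = e)
    (hf_m : m' ≫ f = (f ⊗ₘ f) ≫ m)
    (hh_ε : h ≫ ε' = ε)
    (hh_δ : δ ≫ (h ⊗ₘ h) = h ≫ δ') :
    δ ≫ ((h ≫ f) ⊗ₘ (h ≫ f)) ≫ m = lam • (h ≫ f) := by
  calc δ ≫ ((h ≫ f) ⊗ₘ (h ≫ f)) ≫ m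
      = δ ≫ (h ⊗ₘ h) ≫ (f ⊗ₘ f) ≫ m := by rw [← MonoidalCategory.tensorHom_comp_tensorHom, Category.assoc]
    _ = h ≫ δ' ≫ (f ⊗ₘ f) ≫ m := by rw [← Category.assoc, hh_δ, Category.assoc]
    _ = h ≫ δ' ≫ m' ≫ f := by rw [← hf_m]
    _ = lam • (h ≫ f) := by
        slice_lhs 2 3 => rw [h_sep]
        simp
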